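/- For every n ≥ 1, the group SL(n,ℤ) is generated by its elements of finite order. -/

import Mathlib

open Matrix

namespace Stmt2Aux
variable {n : ℕ}

def embEquiv (i j : Fin n) (hij : i ≠ j) : Fin n ≃ (Fin 2 ⊕ {x : Fin n // x ≠ i ∧ x ≠ j}) where
  toFun x := if h1 : x = i then Sum.inl 0 else if h2 : x = j then Sum.inl 1 else Sum.inr ⟨x, h1, h2⟩
  invFun y := Sum.rec (fun p => if p = 0 then i else j) (fun s => s.1) y
  left_inv x := by
    by_cases h1 : x = i
    · simp [h1]
    · by_cases h2 : x = j <;> simp [h1, h2, Ne.symm hij]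
  right_inv y := by
    rcases y with p | s
    · fin_cases p <;> simp [hij, Ne.symm hij]
    · rcases s with ⟨x, h1, h2⟩; simp [h1, h2]

lemma embEquiv_i (i j : Fin n) (hij : i ≠ j) : embEquiv i j hij i = Sum.inl 0 := by
  simp [embEquiv]

lemma embEquiv_j (i j : Fin n) (hij : i ≠ j) : embEquiv i j hij j = Sum.inl 1 := by
  simp [embEquiv, Ne.symm hij]

lemma embEquiv_other (i j : Fin n) (hij : i ≠ j) (x : Fin n) (h1 : x ≠ i) (h2 : x ≠ j) :
    embEquiv i j hij x = Sum.inr ⟨x, h1, h2⟩ := by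
  simp [embEquiv, h1, h2]

def embFun (i j : Fin n) (hij : i ≠ j) (g : Matrix (Fin 2) (Fin 2) ℤ) :
    Matrix (Fin n) (Fin n) ℤ :=
  (Matrix.fromBlocks g 0 0 (1 : Matrix {x : Fin n // x ≠ i ∧ x ≠ j} {x : Fin n // x ≠ i ∧ x ≠ j} ℤ)).submatrix
    (embEquiv i j hij) (embEquiv i j hij)

lemma embFun_T (i j : Fin n) (hij : i ≠ j) (c : ℤ) :
    embFun i j hij !![1, c; 0, 1] = Matrix.transvection i j c := by
  ext a b
  rw [embFun, Matrix.submatrix_apply, Matrix.transvection, Matrix.add_apply]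
  by_cases hai : a = i
  · rw [hai, embEquiv_i]
    by_cases hbi : b = i
    · rw [hbi, embEquiv_i, Matrix.single_apply_of_ne (h := by tauto), Matrix.one_apply_eq]
      norm_num
    · by_cases hbj : b = j
      · rw [hbj, embEquiv_j, Matrix.single_apply_same, Matrix.one_apply_ne hij]
        norm_num
      · rw [embEquiv_other i j hij b hbi hbj,
          Matrix.single_apply_of_ne (h := by tauto), Matrix.one_apply_ne (by tauto)]
        norm_num
  · by_cases haj : a = j
    · rw [haj, embEquiv_j]
      by_cases hbi : b = i
      · rw [hbi, embEquiv_i, Matrix.single_apply_of_ne (h := by tauto),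
          Matrix.one_apply_ne (Ne.symm hij)]
        norm_num
      · by_cases hbj : b = j
        · rw [hbj, embEquiv_j, Matrix.single_apply_of_ne (h := by tauto), Matrix.one_apply_eq]
          norm_num
        · rw [embEquiv_other i j hij b hbi hbj,
            Matrix.single_apply_of_ne (h := by tauto), Matrix.one_apply_ne (by tauto)]
          norm_num
    · rw [embEquiv_other i j hij a hai haj, Matrix.single_apply_of_ne (h := by tauto)]
      by_cases hbi : b = i
      · rw [hbi, embEquiv_i, Matrix.one_apply_ne hai]
        norm_num
      · by_cases hbj : b = j
        · rw [hbj, embEquiv_j, Matrix.one_apply_ne haj]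
          norm_num
        · rw [embEquiv_other i j hij b hbi hbj, Matrix.fromBlocks_apply₂₂, add_zero,
            Matrix.one_apply, Matrix.one_apply]
          simp [Subtype.ext_iff]

lemma embFun_mul (i j : Fin n) (hij : i ≠ j) (g h : Matrix (Fin 2) (Fin 2) ℤ) :
    embFun i j hij (g * h) = embFun i j hij g * embFun i j hij h := by
  rw [embFun, embFun, embFun, Matrix.submatrix_mul_equiv, Matrix.fromBlocks_multiply]
  simp

lemma embFun_one (i j : Fin n) (hij : i ≠ j) : embFun i j hij 1 = 1 := by
  rw [embFun, Matrix.fromBlocks_one, Matrix.submatrix_one_equiv]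

lemma embFun_det (i j : Fin n) (hij : i ≠ j) (g : Matrix (Fin 2) (Fin 2) ℤ) :
    (embFun i j hij g).det = g.det := by
  rw [embFun, Matrix.det_submatrix_equiv_self, Matrix.det_fromBlocks_zero₂₁]
  simp

def emb (i j : Fin n) (hij : i ≠ j) :
    Matrix.SpecialLinearGroup (Fin 2) ℤ →* Matrix.SpecialLinearGroup (Fin n) ℤ where
  toFun g := ⟨embFun i j hij g.1, by rw [embFun_det]; exact g.2⟩
  map_one' := Subtype.ext (embFun_one i j hij)
  map_mul' g h := Subtype.ext (embFun_mul i j hij g.1 h.1)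

/-- The transvection as an element of `SL(n, ℤ)`. -/
def tv (i j : Fin n) (hij : i ≠ j) (c : ℤ) : Matrix.SpecialLinearGroup (Fin n) ℤ :=
  ⟨Matrix.transvection i j c, Matrix.det_transvection_of_ne i j hij c⟩

lemma tv_eq (i j : Fin n) (hij : i ≠ j) (c : ℤ) :
    tv i j hij c = emb i j hij (ModularGroup.T ^ c) := by
  apply Subtype.ext
  show Matrix.transvection i j c = embFun i j hij (ModularGroup.T ^ c).1
  rw [ModularGroup.coe_T_zpow, embFun_T]

lemma S4 : (ModularGroup.S) ^ 4 = 1 := by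
  apply Subtype.ext
  show (ModularGroup.S : Matrix (Fin 2) (Fin 2) ℤ) ^ 4 = 1
  rw [ModularGroup.coe_S]
  norm_num [pow_succ, Matrix.mul_fin_two]
  exact (Matrix.etaExpand_eq (1 : Matrix (Fin 2) (Fin 2) ℤ)).symm ▸ rfl

lemma ST6 : (ModularGroup.S * ModularGroup.T) ^ 6 = 1 := by
  apply Subtype.ext
  show ((ModularGroup.S : Matrix (Fin 2) (Fin 2) ℤ) * ModularGroup.T) ^ 6 = 1
  rw [ModularGroup.coe_S, ModularGroup.coe_T]
  norm_num [pow_succ, Matrix.mul_fin_two]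
  exact (Matrix.etaExpand_eq (1 : Matrix (Fin 2) (Fin 2) ℤ)).symm ▸ rfl

set_option maxHeartbeats 1000000 in
lemma tv_mem (i j : Fin n) (hij : i ≠ j) (c : ℤ) :
    tv i j hij c ∈
      Subgroup.closure {g : Matrix.SpecialLinearGroup (Fin n) ℤ | IsOfFinOrder g} := by
  have hS : IsOfFinOrder (emb i j hij ModularGroup.S) :=
    (emb i j hij).isOfFinOrder (isOfFinOrder_iff_pow_eq_one.2 ⟨4, by norm_num, S4⟩)
  have hST : IsOfFinOrder (emb i j hij (ModularGroup.S * ModularGroup.T)) :=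
    (emb i j hij).isOfFinOrder (isOfFinOrder_iff_pow_eq_one.2 ⟨6, by norm_num, ST6⟩)
  have hT : ModularGroup.T = ModularGroup.S⁻¹ * (ModularGroup.S * ModularGroup.T) := (inv_mul_cancel_left _ _).symm
  have hS' : emb i j hij ModularGroup.S ∈
      {g : Matrix.SpecialLinearGroup (Fin n) ℤ | IsOfFinOrder g} := hS
  have hST' : emb i j hij (ModularGroup.S * ModularGroup.T) ∈
      {g : Matrix.SpecialLinearGroup (Fin n) ℤ | IsOfFinOrder g} := hST
  rw [tv_eq, hT, map_zpow, _root_.map_mul, map_inv]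
  exact Subgroup.zpow_mem _
    (mul_mem (inv_mem (Subgroup.subset_closure hS')) (Subgroup.subset_closure hST')) c


theorem natAbs_emod_lt' (v u : ℤ) (hu : u ≠ 0) : (v % u).natAbs < u.natAbs := by
  have h0 : v % u = v % |u| := (Int.emod_abs v u).symm
  have h1 : 0 ≤ v % u := Int.emod_nonneg v hu
  have h2 : v % |u| < |u| := Int.emod_lt_of_pos v (abs_pos.mpr hu)
  rw [h0] at h1
  have := Int.natAbs_lt_natAbs_of_nonneg_of_lt h1 h2
  rwa [Int.natAbs_abs, ← h0] at this

/-- The subgroup generated by elements of finite order. -/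
def Hgrp (n : ℕ) : Subgroup (Matrix.SpecialLinearGroup (Fin n) ℤ) :=
  Subgroup.closure {g : Matrix.SpecialLinearGroup (Fin n) ℤ | IsOfFinOrder g}

lemma tv_mem' (i j : Fin n) (hij : i ≠ j) (c : ℤ) : tv i j hij c ∈ Hgrp n :=
  tv_mem i j hij c

lemma mem_of_tv_mul (i j : Fin n) (hij : i ≠ j) (c : ℤ) {M : Matrix.SpecialLinearGroup (Fin n) ℤ}
    (h : tv i j hij c * M ∈ Hgrp n) : M ∈ Hgrp n := by
  have := mul_mem (inv_mem (tv_mem' i j hij c)) h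
  rwa [inv_mul_cancel_left] at this

lemma mem_of_mul_tv (i j : Fin n) (hij : i ≠ j) (c : ℤ) {M : Matrix.SpecialLinearGroup (Fin n) ℤ}
    (h : M * tv i j hij c ∈ Hgrp n) : M ∈ Hgrp n := by
  have := mul_mem h (inv_mem (tv_mem' i j hij c))
  rwa [mul_inv_cancel_right] at this

lemma tv_mul_apply (i j : Fin n) (hij : i ≠ j) (c : ℤ)
    (M : Matrix.SpecialLinearGroup (Fin n) ℤ) (a b : Fin n) :
    (tv i j hij c * M).1 a b = M.1 a b + if a = i then c * M.1 j b else 0 := by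
  show (Matrix.transvection i j c * M.1) a b = _
  by_cases hai : a = i
  · rw [hai, if_pos rfl, Matrix.transvection_mul_apply_same]
  · rw [Matrix.transvection_mul_apply_of_ne i j a b hai, if_neg hai, add_zero]

lemma mul_tv_apply (i j : Fin n) (hij : i ≠ j) (c : ℤ)
    (M : Matrix.SpecialLinearGroup (Fin n) ℤ) (a b : Fin n) :
    (M * tv i j hij c).1 a b = M.1 a b + if b = j then c * M.1 a i else 0 := by
  show (M.1 * Matrix.transvection i j c) a b = _
  by_cases hbj : b = j
  · rw [hbj, if_pos rfl, Matrix.mul_transvection_apply_same]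
  · rw [Matrix.mul_transvection_apply_of_ne i j a b hbj, if_neg hbj, add_zero]

/-- First `k` rows and columns agree with the identity matrix. -/
def IsRed (k : ℕ) (M : Matrix.SpecialLinearGroup (Fin n) ℤ) : Prop :=
  ∀ a b : Fin n, ((a : ℕ) < k ∨ (b : ℕ) < k) → M.1 a b = if a = b then 1 else 0

lemma tv_mul_isRed (i j : Fin n) (hij : i ≠ j) (c : ℤ) {k : ℕ}
    {M : Matrix.SpecialLinearGroup (Fin n) ℤ} (hM : IsRed k M)
    (hik : k ≤ (i : ℕ)) (hjk : k ≤ (j : ℕ)) : IsRed k (tv i j hij c * M) := by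
  intro a b hab
  rw [tv_mul_apply]
  by_cases hai : a = i
  · have hbk : (b : ℕ) < k := by
      rcases hab with h | h
      · exact absurd h (by rw [hai]; omega)
      · exact h
    rw [if_pos hai, hM j b (Or.inr hbk), if_neg (Fin.ne_of_val_ne (by omega)),
      mul_zero, add_zero]
    exact hM a b hab
  · rw [if_neg hai, add_zero]
    exact hM a b hab

lemma mul_tv_isRed (i j : Fin n) (hij : i ≠ j) (c : ℤ) {k : ℕ}
    {M : Matrix.SpecialLinearGroup (Fin n) ℤ} (hM : IsRed k M)
    (hik : k ≤ (i : ℕ)) (hjk : k ≤ (j : ℕ)) : IsRed k (M * tv i j hij c) := by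
  intro a b hab
  rw [mul_tv_apply]
  by_cases hbj : b = j
  · have hak : (a : ℕ) < k := by
      rcases hab with h | h
      · exact h
      · exact absurd h (by rw [hbj]; omega)
    rw [if_pos hbj, hM a i (Or.inl hak), if_neg (Fin.ne_of_val_ne (by omega)),
      mul_zero, add_zero]
    exact hM a b hab
  · rw [if_neg hbj, add_zero]
    exact hM a b hab

lemma adj_sum (M : Matrix.SpecialLinearGroup (Fin n) ℤ) (K : Fin n) :
    ∑ x : Fin n, M.1.adjugate K x * M.1 x K = 1 := by
  have h := Matrix.adjugate_mul M.1
  have h2 : (M.1.adjugate * M.1) K K = M.1.det • (1 : Matrix (Fin n) (Fin n) ℤ) K K := by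
    rw [h]; rfl
  rw [Matrix.mul_apply] at h2
  rw [h2, Matrix.one_apply_eq, M.2, smul_eq_mul, mul_one]

lemma clearRow (k : ℕ) (hk : k < n)
    (IH : ∀ M : Matrix.SpecialLinearGroup (Fin n) ℤ, IsRed (k + 1) M → M ∈ Hgrp n) :
    ∀ (t : ℕ) (M : Matrix.SpecialLinearGroup (Fin n) ℤ), IsRed k M →
      (∀ a : Fin n, M.1 a ⟨k, hk⟩ = if a = ⟨k, hk⟩ then 1 else 0) →
      (∑ b : Fin n, (M.1 ⟨k, hk⟩ b).natAbs) ≤ t → M ∈ Hgrp n := by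
  set K : Fin n := ⟨k, hk⟩ with hK
  have hKval : (K : ℕ) = k := rfl
  intro t
  induction t with
  | zero =>
    intro M hInv hcol hsum
    exfalso
    have h0 : (M.1 K K).natAbs = 0 := by
      have := Finset.sum_eq_zero_iff.mp (Nat.le_zero.mp hsum) K (Finset.mem_univ K)
      exact this
    have h1 : M.1 K K = 1 := by rw [hcol K, if_pos rfl]
    rw [h1] at h0
    norm_num at h0
  | succ t ih =>
    intro M hInv hcol hsum
    by_cases hrow : ∀ b : Fin n, M.1 K b = if K = b then 1 else 0
    · apply IH
      intro a b hab
      by_cases h1 : (a : ℕ) < k ∨ (b : ℕ) < k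
      · exact hInv a b h1
      · push_neg at h1
        rcases hab with ha | hb
        · have haK : a = K := Fin.ext (by omega)
          rw [haK]
          exact hrow b
        · have hbK : b = K := Fin.ext (by omega)
          rw [hbK]
          exact hcol a
    · push_neg at hrow
      obtain ⟨b, hb⟩ := hrow
      have hbK : b ≠ K := by
        intro h
        apply hb
        rw [h]
        exact hcol K
      have hKb : K ≠ b := Ne.symm hbK
      have hbk : ¬ (b : ℕ) < k := by
        intro h
        exact hb (hInv K b (Or.inr h))
      have hbne : M.1 K b ≠ 0 := by
        intro h
        apply hb
        rw [h, if_neg hKb]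
      set c : ℤ := - M.1 K b with hc
      set M' := M * tv K b hKb c with hM'
      have happ : ∀ a b' : Fin n, M'.1 a b' = M.1 a b' + if b' = b then c * M.1 a K else 0 :=
        fun a b' => mul_tv_apply K b hKb c M a b'
      have hInv' : IsRed k M' := mul_tv_isRed K b hKb c hInv (by omega) (by omega)
      have hcol' : ∀ a : Fin n, M'.1 a K = if a = K then 1 else 0 := by
        intro a
        rw [happ, if_neg hbK.symm, add_zero, hcol]
      have hzero : M'.1 K b = 0 := by
        rw [happ, if_pos rfl, hcol K, if_pos rfl, hc]
        ring
      have hsame : ∀ b' : Fin n, b' ≠ b → M'.1 K b' = M.1 K b' := by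
        intro b' hb'
        rw [happ, if_neg hb', add_zero]
      have hsum' : (∑ b' : Fin n, (M'.1 K b').natAbs) ≤ t := by
        have e1 : ∑ b' : Fin n, (M'.1 K b').natAbs
            = ∑ b' ∈ Finset.univ.erase b, (M'.1 K b').natAbs + (M'.1 K b).natAbs :=
          (Finset.sum_erase_add _ _ (Finset.mem_univ b)).symm
        have e2 : ∑ b' : Fin n, (M.1 K b').natAbs
            = ∑ b' ∈ Finset.univ.erase b, (M.1 K b').natAbs + (M.1 K b).natAbs :=
          (Finset.sum_erase_add _ _ (Finset.mem_univ b)).symm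
        have e3 : ∑ b' ∈ Finset.univ.erase b, (M'.1 K b').natAbs
            = ∑ b' ∈ Finset.univ.erase b, (M.1 K b').natAbs := by
          apply Finset.sum_congr rfl
          intro x hx
          rw [hsame x (Finset.ne_of_mem_erase hx)]
        have e4 : (M.1 K b).natAbs ≠ 0 := Int.natAbs_ne_zero.mpr hbne
        rw [e1, e3, hzero]
        rw [e2] at hsum
        omega
      exact mem_of_mul_tv K b hKb c (ih M' hInv' hcol' hsum')

lemma clearCol (k : ℕ) (hk : k < n)
    (IH : ∀ M : Matrix.SpecialLinearGroup (Fin n) ℤ, IsRed (k + 1) M → M ∈ Hgrp n) :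
    ∀ (t : ℕ) (M : Matrix.SpecialLinearGroup (Fin n) ℤ), IsRed k M →
      (∑ a : Fin n, (M.1 a ⟨k, hk⟩).natAbs) ≤ t → M ∈ Hgrp n := by
  set K : Fin n := ⟨k, hk⟩ with hK
  have hKval : (K : ℕ) = k := rfl
  -- helper facts used in several places
  intro t
  induction t with
  | zero =>
    intro M hInv hsum
    exfalso
    have h0 : ∀ x : Fin n, M.1 x K = 0 := by
      intro x
      have := Finset.sum_eq_zero_iff.mp (Nat.le_zero.mp hsum) x (Finset.mem_univ x)
      exact Int.natAbs_eq_zero.mp this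
    have := adj_sum M K
    rw [Finset.sum_eq_zero (fun x _ => by rw [h0 x, mul_zero])] at this
    norm_num at this
  | succ t ih =>
    intro M hInv hsum
    by_cases hcol : ∀ a : Fin n, M.1 a K = if a = K then 1 else 0
    · exact clearRow k hk IH _ M hInv hcol le_rfl
    by_cases h2 : ∃ a a' : Fin n, a ≠ a' ∧ M.1 a K ≠ 0 ∧ M.1 a' K ≠ 0 ∧
        (M.1 a K).natAbs ≤ (M.1 a' K).natAbs
    · -- Euclidean step
      obtain ⟨a, a', haa, hu, hv, hle⟩ := h2
      have hak : ¬ (a : ℕ) < k := by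
        intro h
        exact hu (by rw [hInv a K (Or.inl h), if_neg (Fin.ne_of_val_ne (by omega))])
      have ha'k : ¬ (a' : ℕ) < k := by
        intro h
        exact hv (by rw [hInv a' K (Or.inl h), if_neg (Fin.ne_of_val_ne (by omega))])
      set u : ℤ := M.1 a K with hu'
      set v : ℤ := M.1 a' K with hv'
      set q : ℤ := v / u with hq
      set M' := tv a' a haa.symm (-q) * M with hM'
      have happ : ∀ x b : Fin n, M'.1 x b = M.1 x b + if x = a' then (-q) * M.1 a b else 0 :=
        fun x b => tv_mul_apply a' a haa.symm (-q) M x b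
      have hInv' : IsRed k M' := tv_mul_isRed a' a haa.symm (-q) hInv (by omega) (by omega)
      have hrem : M'.1 a' K = v % u := by
        rw [happ, if_pos rfl, ← hu', ← hv', Int.emod_def]
        ring
      have hsame : ∀ x : Fin n, x ≠ a' → M'.1 x K = M.1 x K := by
        intro x hx
        rw [happ, if_neg hx, add_zero]
      have hsum' : (∑ x : Fin n, (M'.1 x K).natAbs) ≤ t := by
        have e1 : ∑ x : Fin n, (M'.1 x K).natAbs
            = ∑ x ∈ Finset.univ.erase a', (M'.1 x K).natAbs + (M'.1 a' K).natAbs :=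
          (Finset.sum_erase_add _ _ (Finset.mem_univ a')).symm
        have e2 : ∑ x : Fin n, (M.1 x K).natAbs
            = ∑ x ∈ Finset.univ.erase a', (M.1 x K).natAbs + (M.1 a' K).natAbs :=
          (Finset.sum_erase_add _ _ (Finset.mem_univ a')).symm
        have e3 : ∑ x ∈ Finset.univ.erase a', (M'.1 x K).natAbs
            = ∑ x ∈ Finset.univ.erase a', (M.1 x K).natAbs := by
          apply Finset.sum_congr rfl
          intro x hx
          rw [hsame x (Finset.ne_of_mem_erase hx)]
        have e4 : (v % u).natAbs < u.natAbs := natAbs_emod_lt' v u hu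
        rw [e1, e3, hrem]
        rw [e2] at hsum
        omega
      exact mem_of_tv_mul a' a haa.symm (-q) (ih M' hInv' hsum')
    · -- at most one nonzero entry in column `K`
      have huniq : ∀ x y : Fin n, M.1 x K ≠ 0 → M.1 y K ≠ 0 → x = y := by
        intro x y hx hy
        by_contra hne
        rcases le_total (M.1 x K).natAbs (M.1 y K).natAbs with h | h
        · exact h2 ⟨x, y, hne, hx, hy, h⟩
        · exact h2 ⟨y, x, Ne.symm hne, hy, hx, h⟩
      have hex : ∃ a0 : Fin n, M.1 a0 K ≠ 0 := by
        by_contra h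
        push_neg at h
        have := adj_sum M K
        rw [Finset.sum_eq_zero (fun x _ => by rw [h x, mul_zero])] at this
        norm_num at this
      obtain ⟨a0, ha0⟩ := hex
      have hz : ∀ x : Fin n, x ≠ a0 → M.1 x K = 0 := by
        intro x hx
        by_contra h
        exact hx (huniq x a0 h ha0)
      have ha0k : ¬ (a0 : ℕ) < k := by
        intro h
        exact ha0 (by rw [hInv a0 K (Or.inl h), if_neg (Fin.ne_of_val_ne (by omega))])
      have hsum1 : M.1.adjugate K a0 * M.1 a0 K = 1 := by
        have := adj_sum M K
        rwa [Finset.sum_eq_single a0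
          (fun x _ hx => by rw [hz x hx, mul_zero]) (fun h => absurd (Finset.mem_univ a0) h)]
          at this
      have hunit : M.1 a0 K = 1 ∨ M.1 a0 K = -1 :=
        Int.isUnit_iff.mp (IsUnit.of_mul_eq_one _ (by rw [mul_comm]; exact hsum1))
      by_cases ha0K : a0 = K
      · -- pivot is on the diagonal
        subst ha0K
        rcases hunit with h1 | h1
        · -- column is already the basis vector
          apply clearRow k hk IH _ M hInv ?_ le_rfl
          intro x
          by_cases hx : x = K
          · rw [hx, if_pos rfl, h1]
          · rw [if_neg hx, hz x hx]
        · -- `M K K = -1`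
          by_cases hex2 : ∃ i1 : Fin n, k < (i1 : ℕ)
          · obtain ⟨i1, hi1⟩ := hex2
            have hi1K : i1 ≠ K := Fin.ne_of_val_ne (by omega)
            have hKi1 : K ≠ i1 := Ne.symm hi1K
            set M1 := tv i1 K hi1K 1 * M with hM1
            have happ1 : ∀ x b : Fin n, M1.1 x b = M.1 x b + if x = i1 then 1 * M.1 K b else 0 :=
              fun x b => tv_mul_apply i1 K hi1K 1 M x b
            have hInv1 : IsRed k M1 := tv_mul_isRed i1 K hi1K 1 hInv (by omega) (by omega)
            set M2 := tv K i1 hKi1 (-2) * M1 with hM2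
            have happ2 : ∀ x b : Fin n, M2.1 x b = M1.1 x b + if x = K then (-2) * M1.1 i1 b else 0 :=
              fun x b => tv_mul_apply K i1 hKi1 (-2) M1 x b
            have hInv2 : IsRed k M2 := tv_mul_isRed K i1 hKi1 (-2) hInv1 (by omega) (by omega)
            set M3 := tv i1 K hi1K 1 * M2 with hM3
            have happ3 : ∀ x b : Fin n, M3.1 x b = M2.1 x b + if x = i1 then 1 * M2.1 K b else 0 :=
              fun x b => tv_mul_apply i1 K hi1K 1 M2 x b
            have hInv3 : IsRed k M3 := tv_mul_isRed i1 K hi1K 1 hInv2 (by omega) (by omega)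
            have hv1K : M1.1 K K = -1 := by
              rw [happ1, if_neg hKi1, add_zero, h1]
            have hv1i1 : M1.1 i1 K = -1 := by
              rw [happ1, if_pos rfl, hz i1 hi1K, h1]
              ring
            have hv1o : ∀ x : Fin n, x ≠ K → x ≠ i1 → M1.1 x K = 0 := by
              intro x hxK hxi1
              rw [happ1, if_neg hxi1, add_zero, hz x hxK]
            have hv2K : M2.1 K K = 1 := by
              rw [happ2, if_pos rfl, hv1K, hv1i1]
              ring
            have hv2i1 : M2.1 i1 K = -1 := by
              rw [happ2, if_neg hi1K, add_zero, hv1i1]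
            have hv2o : ∀ x : Fin n, x ≠ K → x ≠ i1 → M2.1 x K = 0 := by
              intro x hxK hxi1
              rw [happ2, if_neg hxK, add_zero, hv1o x hxK hxi1]
            have hcol3 : ∀ x : Fin n, M3.1 x K = if x = K then 1 else 0 := by
              intro x
              by_cases hxi1 : x = i1
              · rw [hxi1, if_neg hi1K, happ3, if_pos rfl, hv2i1, hv2K]
                ring
              · rw [happ3, if_neg hxi1, add_zero]
                by_cases hxK : x = K
                · rw [hxK, if_pos rfl, hv2K]
                · rw [if_neg hxK, hv2o x hxK hxi1]
            have h3 : M3 ∈ Hgrp n := clearRow k hk IH _ M3 hInv3 hcol3 le_rfl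
            exact mem_of_tv_mul i1 K hi1K 1
              (mem_of_tv_mul K i1 hKi1 (-2) (mem_of_tv_mul i1 K hi1K 1 h3))
          · -- no index beyond `k`: the matrix is diagonal with determinant `-1`, contradiction
            exfalso
            push_neg at hex2
            have hM : M.1 = Matrix.diagonal (fun x => if x = K then (-1 : ℤ) else 1) := by
              ext x y
              by_cases hxy : x = y
              · rw [← hxy, Matrix.diagonal_apply_eq]
                by_cases hxK : x = K
                · rw [if_pos hxK, hxK, h1]
                · rw [if_neg hxK]
                  have hxk : (x : ℕ) < k := by
                    have h5 := hex2 x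
                    have h6 : (x : ℕ) ≠ k := fun h => hxK (Fin.ext (by omega))
                    omega
                  rw [hInv x x (Or.inl hxk), if_pos rfl]
              · rw [Matrix.diagonal_apply_ne _ hxy]
                by_cases hxk : (x : ℕ) < k
                · rw [hInv x y (Or.inl hxk), if_neg hxy]
                · have hxK : x = K := Fin.ext (by have := hex2 x; omega)
                  have hyk : (y : ℕ) < k := by
                    have h5 := hex2 y
                    have h6 : (y : ℕ) ≠ k := by
                      intro h
                      exact hxy (hxK.trans (Fin.ext (by omega)))
                    omega
                  rw [hInv x y (Or.inr hyk), if_neg hxy]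
            have hdet := M.2
            rw [hM, Matrix.det_diagonal,
              Finset.prod_ite_eq' Finset.univ K (fun _ => (-1 : ℤ))] at hdet
            simp at hdet
      · -- pivot off the diagonal
        have hKa0 : K ≠ a0 := Ne.symm ha0K
        set ε : ℤ := M.1 a0 K with hε
        have hεsq : ε * ε = 1 := by rcases hunit with h | h <;> rw [h] <;> norm_num
        set M1 := tv K a0 hKa0 ε * M with hM1
        have happ1 : ∀ x b : Fin n, M1.1 x b = M.1 x b + if x = K then ε * M.1 a0 b else 0 :=
          fun x b => tv_mul_apply K a0 hKa0 ε M x b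
        have hInv1 : IsRed k M1 := tv_mul_isRed K a0 hKa0 ε hInv (by omega) (by omega)
        set M2 := tv a0 K ha0K (-ε) * M1 with hM2
        have happ2 : ∀ x b : Fin n, M2.1 x b = M1.1 x b + if x = a0 then (-ε) * M1.1 K b else 0 :=
          fun x b => tv_mul_apply a0 K ha0K (-ε) M1 x b
        have hInv2 : IsRed k M2 := tv_mul_isRed a0 K ha0K (-ε) hInv1 (by omega) (by omega)
        have hv1K : M1.1 K K = 1 := by
          rw [happ1, if_pos rfl, hz K hKa0, ← hε, zero_add, hεsq]
        have hv1a0 : M1.1 a0 K = ε := by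
          rw [happ1, if_neg ha0K, add_zero, hε]
        have hv1o : ∀ x : Fin n, x ≠ K → x ≠ a0 → M1.1 x K = 0 := by
          intro x hxK hxa0
          rw [happ1, if_neg hxK, add_zero, hz x hxa0]
        have hcol2 : ∀ x : Fin n, M2.1 x K = if x = K then 1 else 0 := by
          intro x
          by_cases hxa0 : x = a0
          · rw [hxa0, if_neg ha0K, happ2, if_pos rfl, hv1a0, hv1K]
            ring
          · rw [happ2, if_neg hxa0, add_zero]
            by_cases hxK : x = K
            · rw [hxK, if_pos rfl, hv1K]
            · rw [if_neg hxK, hv1o x hxK hxa0]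
        have h3 : M2 ∈ Hgrp n := clearRow k hk IH _ M2 hInv2 hcol2 le_rfl
        exact mem_of_tv_mul K a0 hKa0 ε (mem_of_tv_mul a0 K ha0K (-ε) h3)

lemma all_mem (M : Matrix.SpecialLinearGroup (Fin n) ℤ) : M ∈ Hgrp n := by
  have key : ∀ (d k : ℕ), n ≤ k + d → ∀ M : Matrix.SpecialLinearGroup (Fin n) ℤ,
      IsRed k M → M ∈ Hgrp n := by
    intro d
    induction d with
    | zero =>
      intro k hkn M hM
      have hM1 : M = 1 := by
        apply Subtype.ext
        ext a b
        rw [hM a b (Or.inl (by omega)), Matrix.SpecialLinearGroup.coe_one, Matrix.one_apply]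
      rw [hM1]
      exact one_mem _
    | succ d ih =>
      intro k hkn M hM
      by_cases hkn' : k < n
      · exact clearCol k hkn' (fun M' hM' => ih (k + 1) (by omega) M' hM') _ M hM le_rfl
      · exact ih k (by omega) M hM
  exact key n 0 (by omega) M (fun a b hab => absurd hab (by omega))

end Stmt2Aux

/-- For every `n ≥ 1`, `SL(n, ℤ)` is generated by its elements of finite order. -/
theorem stmt2 (n : ℕ) (hn : 1 ≤ n) :
    Subgroup.closure {g : Matrix.SpecialLinearGroup (Fin n) ℤ | IsOfFinOrder g} = ⊤ := by
  exact (Subgroup.eq_top_iff' _).2 Stmt2Aux.all_mem
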